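/- (Stability of positive-linear independence) Let G₁,…,G_l, H₁,…,H_r : ℝ^N → ℝ^N be continuous vector-valued maps. If the family of vectors {G₁(w̄),…,G_l(w̄)} ∪ {H₁(w̄),…,H_r(w̄)} is positive-linearly independent at w̄ (i.e., the only α ∈ ℝ^l with α ≥ 0 and β ∈ ℝ^r with Σ αᵢGᵢ(w̄) + Σ βⱼHⱼ(w̄) = 0 is (α,β) = 0), then there exists a neighborhood U of w̄ such that the family {G₁(w),…,G_l(w)} ∪ {H₁(w),…,H_r(w)} is positive-linearly independent for every w ∈ U. -/

import Mathlib

open scoped BigOperators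

/-- Stability of positive-linear independence: if the continuous vector
fields `G₁,…,G_l, H₁,…,H_r` are positive-linearly independent at `w̄`, then
they are positive-linearly independent at every point of some neighborhood
of `w̄`. -/
theorem posLinIndep_stable
    {N l r : ℕ}
    (G : Fin l → (Fin N → ℝ) → (Fin N → ℝ))
    (H : Fin r → (Fin N → ℝ) → (Fin N → ℝ))
    (hG : ∀ i, Continuous (G i))
    (hH : ∀ j, Continuous (H j))
    (wbar : Fin N → ℝ)
    -- positive-linear independence at w̄
    (hind : ∀ (α : Fin l → ℝ) (β : Fin r → ℝ), (∀ i, 0 ≤ α i) →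
      (∑ i, α i • G i wbar) + (∑ j, β j • H j wbar) = 0 → α = 0 ∧ β = 0) :
    ∃ U ∈ nhds wbar, ∀ w ∈ U,
      ∀ (α : Fin l → ℝ) (β : Fin r → ℝ), (∀ i, 0 ≤ α i) →
        (∑ i, α i • G i w) + (∑ j, β j • H j w) = 0 → α = 0 ∧ β = 0 := by
  classical
  set E := ((Fin l → ℝ) × (Fin r → ℝ))
  set F : (Fin N → ℝ) × E → (Fin N → ℝ) :=
    fun z => (∑ i, z.2.1 i • G i z.1) + (∑ j, z.2.2 j • H j z.1) with hF
  have hFcont : Continuous F := by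
    apply Continuous.add
    · exact continuous_finset_sum _ fun i _ =>
        ((continuous_apply i).comp continuous_snd.fst).smul ((hG i).comp continuous_fst)
    · exact continuous_finset_sum _ fun j _ =>
        ((continuous_apply j).comp continuous_snd.snd).smul ((hH j).comp continuous_fst)
  have hcl : IsClosed {p : E | ∀ i, 0 ≤ p.1 i} := by
    have : {p : E | ∀ i, 0 ≤ p.1 i} = ⋂ i, {p : E | 0 ≤ p.1 i} := by
      ext p; simp
    rw [this]
    exact isClosed_iInter fun i =>
      isClosed_le continuous_const ((continuous_apply i).comp continuous_fst)
  set S : Set E := Metric.sphere (0 : E) 1 ∩ {p : E | ∀ i, 0 ≤ p.1 i} with hS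
  have hScpt : IsCompact S := (isCompact_sphere (0 : E) 1).inter_right hcl
  have hOpen : IsOpen {z : (Fin N → ℝ) × E | F z ≠ 0} :=
    (isOpen_compl_singleton).preimage hFcont
  have hbase : ∀ p ∈ S, F (wbar, p) ≠ 0 := by
    rintro p ⟨hp1, hp2⟩ h0
    obtain ⟨hα, hβ⟩ := hind p.1 p.2 hp2 h0
    have : p = 0 := Prod.ext hα hβ
    rw [this] at hp1
    simp at hp1
  have hev : ∀ᶠ w in nhds wbar, ∀ p ∈ S, F (w, p) ≠ 0 := by
    apply hScpt.eventually_forall_of_forall_eventually (P := fun w p => F (w, p) ≠ 0)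
    intro p hp
    exact hOpen.mem_nhds (hbase p hp)
  refine ⟨{w | ∀ p ∈ S, F (w, p) ≠ 0}, hev, ?_⟩
  intro w hw α β hα hsum
  by_contra hc
  have hp0 : ((α, β) : E) ≠ 0 := by
    intro h
    exact hc ⟨congrArg Prod.fst h, congrArg Prod.snd h⟩
  have hn : (0 : ℝ) < ‖((α, β) : E)‖ := norm_pos_iff.mpr hp0
  set c : ℝ := ‖((α, β) : E)‖⁻¹ with hc'
  have hcpos : 0 < c := inv_pos.mpr hn
  set p' : E := c • ((α, β) : E) with hp'
  have hp'S : p' ∈ S := by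
    constructor
    · simp only [mem_sphere_iff_norm, sub_zero, hp', norm_smul, hc', Real.norm_eq_abs,
        abs_of_pos (inv_pos.mpr hn)]
      refine (mem_sphere_iff_norm (E := E)).2 ?_
      rw [sub_zero, norm_smul, Real.norm_eq_abs, abs_of_pos (inv_pos.mpr hn)]
      exact inv_mul_cancel₀ (ne_of_gt hn)
    · intro i
      have : p'.1 i = c * α i := rfl
      rw [this]
      exact mul_nonneg hcpos.le (hα i)
  have hzero : F (w, p') = 0 := by
    have : F (w, p') = c • F (w, (α, β)) := by
      simp only [hF, hp', Prod.smul_fst, Prod.smul_snd, Pi.smul_apply, smul_eq_mul,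
        smul_add, Finset.smul_sum, smul_smul]
    rw [this, show F (w, (α, β)) = 0 from hsum, smul_zero]
  exact hw p' hp'S hzero
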